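/- arXiv:1812.00100 — 2 statements merged into one kernel-verified Lean document; each statement's English description precedes it below -/
import Mathlib

section
/- Under the null hypothesis H0 (all P_j equal), for all p, r ≥ 1: ∑_{j=1}^k ∑_{l=1, l≠j}^k ∑_{i=1}^{n_j+n_l} E[Y_{n,p,i,j,l}·Y_{n,r,i,j,l}] = [1 + (k−2)·∑_{l=1}^k (n_l/n)²]·λ_p^{1/2}·λ_r^{1/2}·δ_{pr}, where δ_{pr} is the Kronecker delta; in particular the sum equals λ_p^{1/2} λ_r^{1/2} (1 + O(n^{-1})) δ_{pr}. -/
open MeasureTheory ProbabilityTheory Filter Finset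
open scoped RealInnerProductSpace NNReal Topology

noncomputable section

/-- The rank-one operator `(u ⊗ v) h = ⟨u, h⟩ v`. -/
def rankOne {H : Type*} [NormedAddCommGroup H] [InnerProductSpace ℝ H] (u v : H) :
    H →L[ℝ] H :=
  (innerSL ℝ u).smulRight v

variable {Ω 𝒳 H : Type*} [NormedAddCommGroup H] [InnerProductSpace ℝ H]

/-- The random variables `Y_{n,p,i,j,l}` of the paper:
for `1 ≤ i ≤ n_j`, `Y = (P_l/√n_j)(e_p(X_i^{(j)}) − E e_p(X_1^{(j)}))`, and for
`n_j + 1 ≤ i ≤ n_j + n_l`, `Y = −(P_l √n_j / n_l)(e_p(X_{i−n_j}^{(l)}) − E e_p(X_1^{(l)}))`,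
where `P_l = n_l/n` and `e_p(x) = ⟨e_p, Φ(x)⟩`. -/
def Yjl [MeasurableSpace 𝒳] (Φ : 𝒳 → H) (e : ℕ → H) {k : ℕ} (nj : Fin k → ℕ) (n : ℕ)
    (X : Fin k → ℕ → Ω → 𝒳) (P : Fin k → Measure 𝒳)
    (p i : ℕ) (j l : Fin k) (ω : Ω) : ℝ :=
  if 1 ≤ i ∧ i ≤ nj j then
    ((nj l : ℝ) / (n : ℝ)) / Real.sqrt (nj j) *
      (⟪e p, Φ (X j (i - 1) ω)⟫ - ∫ x, ⟪e p, Φ x⟫ ∂(P j))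
  else if nj j + 1 ≤ i ∧ i ≤ nj j + nj l then
    -(((nj l : ℝ) / (n : ℝ)) * Real.sqrt (nj j) / (nj l : ℝ)) *
      (⟪e p, Φ (X l (i - nj j - 1) ω)⟫ - ∫ x, ⟪e p, Φ x⟫ ∂(P l))
  else 0

/-- Covariance identity: the centered second moment of the coordinates equals the
inner product against the covariance operator. -/
lemma cov_inner
    [MetricSpace 𝒳] [MeasurableSpace 𝒳] [BorelSpace 𝒳] [CompleteSpace H]
    [SecondCountableTopology H] [MeasurableSpace H] [BorelSpace H]
    (Φ : 𝒳 → H) (hΦ : Measurable Φ)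
    (CK : ℝ) (hCK : ∀ x y : 𝒳, ⟪Φ x, Φ y⟫ ≤ CK)
    (P0 : Measure 𝒳) [IsProbabilityMeasure P0]
    (m0 : H) (hm0 : m0 = ∫ x, Φ x ∂P0)
    (W : H →L[ℝ] H) (hW : W = ∫ x, rankOne (Φ x - m0) (Φ x - m0) ∂P0)
    (u v : H) :
    ∫ x, (⟪u, Φ x⟫ - ∫ y, ⟪u, Φ y⟫ ∂P0) * (⟪v, Φ x⟫ - ∫ y, ⟪v, Φ y⟫ ∂P0) ∂P0
      = ⟪u, W v⟫ := by
  have hB : ∀ x, ‖Φ x‖ ≤ Real.sqrt CK := by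
    intro x
    have h1 : ‖Φ x‖ ^ 2 ≤ CK := by
      rw [← real_inner_self_eq_norm_sq]; exact hCK x x
    calc ‖Φ x‖ = Real.sqrt (‖Φ x‖ ^ 2) := (Real.sqrt_sq (norm_nonneg _)).symm
      _ ≤ Real.sqrt CK := Real.sqrt_le_sqrt h1
  have hΦsm : StronglyMeasurable Φ := hΦ.stronglyMeasurable
  have hΦint : Integrable Φ P0 := by
    refine Integrable.mono' (integrable_const (Real.sqrt CK))
      hΦsm.aestronglyMeasurable (Eventually.of_forall fun x => hB x)
  have hsub : ∀ w : H, ∀ x, ⟪w, Φ x⟫ - ∫ y, ⟪w, Φ y⟫ ∂P0 = ⟪w, Φ x - m0⟫ := by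
    intro w x
    rw [inner_sub_right, hm0, integral_inner hΦint]
  have hrk : ∀ u' : H, ‖rankOne u' u'‖ = ‖u'‖ * ‖u'‖ := fun u' => by
    rw [rankOne, ContinuousLinearMap.norm_smulRight_apply, innerSL_apply_norm]
  have hgc : Continuous fun w : H => rankOne w w := by
    have h1 : Continuous fun w : H => ((innerSL ℝ w : H →L[ℝ] ℝ), w) :=
      (innerSL ℝ).continuous.prodMk continuous_id
    exact (isBoundedBilinearMap_smulRight :
      IsBoundedBilinearMap ℝ fun q : (H →L[ℝ] ℝ) × H => q.1.smulRight q.2).continuous.comp h1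
  have hTsm : StronglyMeasurable fun x => rankOne (Φ x - m0) (Φ x - m0) :=
    hgc.comp_stronglyMeasurable (hΦsm.sub stronglyMeasurable_const)
  have hTint : Integrable (fun x => rankOne (Φ x - m0) (Φ x - m0)) P0 := by
    refine Integrable.mono'
      (integrable_const ((Real.sqrt CK + ‖m0‖) * (Real.sqrt CK + ‖m0‖)))
      hTsm.aestronglyMeasurable (Eventually.of_forall fun x => ?_)
    rw [hrk]
    have hb : ‖Φ x - m0‖ ≤ Real.sqrt CK + ‖m0‖ :=
      (norm_sub_le _ _).trans (add_le_add_left (hB x) _)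
    exact mul_le_mul hb hb (norm_nonneg _) (by positivity)
  have hWv : W v = ∫ x, rankOne (Φ x - m0) (Φ x - m0) v ∂P0 := by
    rw [hW, ContinuousLinearMap.integral_apply hTint]
  have hTvint : Integrable (fun x => rankOne (Φ x - m0) (Φ x - m0) v) P0 := by
    have h := (ContinuousLinearMap.apply ℝ H v).integrable_comp hTint
    simpa using h
  have h2 : ⟪u, W v⟫ = ∫ x, ⟪u, rankOne (Φ x - m0) (Φ x - m0) v⟫ ∂P0 := by
    rw [hWv]; exact (integral_inner hTvint u).symm
  have h3 : ∀ x, ⟪u, rankOne (Φ x - m0) (Φ x - m0) v⟫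
      = ⟪u, Φ x - m0⟫ * ⟪v, Φ x - m0⟫ := by
    intro x
    rw [rankOne, ContinuousLinearMap.smulRight_apply, innerSL_apply_apply, real_inner_smul_right,
      real_inner_comm (Φ x - m0) v]
    ring
  rw [h2]
  refine integral_congr_ae (Eventually.of_forall fun x => ?_)
  simp only [hsub, h3]

/-- first part of Lemma 3.  Under `H₀`,
`∑_j ∑_{l≠j} ∑_{i=1}^{n_j+n_l} E[Y_{n,p,i,j,l} Y_{n,r,i,j,l}]
  = (1 + (k−2) ∑_l (n_l/n)²) √λ_p √λ_r δ_{pr}`. -/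
theorem sum_expect_YY
    [MeasurableSpace Ω] (μ : Measure Ω) [IsProbabilityMeasure μ]
    [MetricSpace 𝒳] [MeasurableSpace 𝒳] [BorelSpace 𝒳] [CompleteSpace H]
    [SecondCountableTopology H] [MeasurableSpace H] [BorelSpace H]
    (Φ : 𝒳 → H) (hΦ : Measurable Φ)
    (CK : ℝ) (hCK : ∀ x y : 𝒳, ⟪Φ x, Φ y⟫ ≤ CK)
    {k : ℕ} (hk : 2 ≤ k)
    (P : Fin k → Measure 𝒳) (P0 : Measure 𝒳) [IsProbabilityMeasure P0]
    -- null hypothesis: common distribution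
    (hH0 : ∀ j, P j = P0)
    (nj : Fin k → ℕ) (hnj : ∀ j, 0 < nj j)
    (n : ℕ) (hn : n = ∑ j, nj j)
    (X : Fin k → ℕ → Ω → 𝒳)
    (hmeas : ∀ j i, Measurable (X j i))
    (hlaw : ∀ j i, Measure.map (X j i) μ = P j)
    (hindep : iIndepFun
      (fun ji : Fin k × ℕ => X ji.1 ji.2) μ)
    -- common covariance operator `W` and its orthonormal eigenbasis
    (m0 : H) (hm0 : m0 = ∫ x, Φ x ∂P0)
    (W : H →L[ℝ] H) (hW : W = ∫ x, rankOne (Φ x - m0) (Φ x - m0) ∂P0)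
    (lam : ℕ → ℝ) (e : ℕ → H)
    (he : Orthonormal ℝ e)
    (hspan : (Submodule.span ℝ (Set.range e)).topologicalClosure = ⊤)
    (heig : ∀ p, W (e p) = lam p • e p)
    (hlam : ∀ p, 0 ≤ lam p) :
    ∀ p r : ℕ,
      ∑ j, ∑ l ∈ Finset.univ.erase j, ∑ i ∈ Finset.Icc 1 (nj j + nj l),
          ∫ ω, Yjl Φ e nj n X P p i j l ω * Yjl Φ e nj n X P r i j l ω ∂μ
        = (1 + ((k : ℝ) - 2) * ∑ l, ((nj l : ℝ) / (n : ℝ)) ^ 2)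
            * Real.sqrt (lam p) * Real.sqrt (lam r) * (if p = r then 1 else 0) := by
  intro p r
  classical
  set C : ℝ := Real.sqrt (lam p) * Real.sqrt (lam r) * (if p = r then 1 else 0) with hC
  -- basic positivity
  have hn0 : 0 < n := by
    rw [hn]
    exact Finset.sum_pos (fun j _ => hnj j) (Finset.univ_nonempty_iff.mpr
      ⟨⟨0, lt_of_lt_of_le two_pos hk⟩⟩)
  have hnR : (0 : ℝ) < (n : ℝ) := by exact_mod_cast hn0
  -- the key covariance computation
  have key : ∫ x, (⟪e p, Φ x⟫ - ∫ y, ⟪e p, Φ y⟫ ∂P0) *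
      (⟪e r, Φ x⟫ - ∫ y, ⟪e r, Φ y⟫ ∂P0) ∂P0 = C := by
    rw [cov_inner Φ hΦ CK hCK P0 m0 hm0 W hW (e p) (e r), heig r, real_inner_smul_right,
      orthonormal_iff_ite.mp he p r, hC]
    rcases eq_or_ne p r with h | h
    · subst h
      simp only [eq_self_iff_true, if_true, mul_one]
      exact (Real.mul_self_sqrt (hlam p)).symm
    · simp [h]
  -- transporting integrals along the laws of the Xᵢ
  have hcomp : ∀ (g : 𝒳 → ℝ), Measurable g → ∀ (j : Fin k) (t : ℕ),
      ∫ ω, g (X j t ω) ∂μ = ∫ x, g x ∂P0 := by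
    intro g hg j t
    rw [← hH0 j, ← hlaw j t,
      integral_map (hmeas j t).aemeasurable hg.stronglyMeasurable.aestronglyMeasurable]
  have hgp : ∀ q : ℕ, Measurable fun x : 𝒳 => ⟪e q, Φ x⟫ - ∫ y, ⟪e q, Φ y⟫ ∂P0 :=
    fun q => (measurable_const.inner hΦ).sub measurable_const
  -- the expectation of a single product term
  have hprod : ∀ (j : Fin k) (t : ℕ) (c : ℝ),
      ∫ ω, (c * (⟪e p, Φ (X j t ω)⟫ - ∫ y, ⟪e p, Φ y⟫ ∂P0)) *
           (c * (⟪e r, Φ (X j t ω)⟫ - ∫ y, ⟪e r, Φ y⟫ ∂P0)) ∂μ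
        = c ^ 2 * C := by
    intro j t c
    have hre : ∀ a b : ℝ, (c * a) * (c * b) = c ^ 2 * (a * b) := fun a b => by ring
    simp_rw [hre]
    rw [integral_const_mul,
      hcomp (fun x => (⟪e p, Φ x⟫ - ∫ y, ⟪e p, Φ y⟫ ∂P0) *
        (⟪e r, Φ x⟫ - ∫ y, ⟪e r, Φ y⟫ ∂P0)) ((hgp p).mul (hgp r)) j t, key]
  -- the inner sum over i
  have hsum_i : ∀ j l : Fin k,
      ∑ i ∈ Finset.Icc 1 (nj j + nj l),
          ∫ ω, Yjl Φ e nj n X P p i j l ω * Yjl Φ e nj n X P r i j l ω ∂μ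
        = (((nj l : ℝ) ^ 2 + (nj j : ℝ) * (nj l : ℝ)) / (n : ℝ) ^ 2) * C := by
    intro j l
    have hjj : (0 : ℝ) < (nj j : ℝ) := by exact_mod_cast hnj j
    have hll : (0 : ℝ) < (nj l : ℝ) := by exact_mod_cast hnj l
    have hicc : Finset.Icc 1 (nj j + nj l) = Finset.Ioc 0 (nj j + nj l) := by
      rw [← Finset.Icc_add_one_left_eq_Ioc]; rfl
    rw [hicc, ← Finset.sum_Ioc_consecutive _ (Nat.zero_le (nj j)) (Nat.le_add_right (nj j) (nj l))]
    have h1 : ∑ i ∈ Finset.Ioc 0 (nj j),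
        ∫ ω, Yjl Φ e nj n X P p i j l ω * Yjl Φ e nj n X P r i j l ω ∂μ
        = (nj j : ℝ) * ((((nj l : ℝ) / (n : ℝ)) / Real.sqrt (nj j)) ^ 2 * C) := by
      rw [Finset.sum_congr rfl (fun i hi => ?_), Finset.sum_const, Nat.card_Ioc,
        Nat.sub_zero, nsmul_eq_mul]
      rw [Finset.mem_Ioc] at hi
      have h1 : 1 ≤ i := hi.1
      simp only [Yjl, hH0, if_pos (And.intro h1 hi.2)]
      exact hprod j (i - 1) _
    have h2 : ∑ i ∈ Finset.Ioc (nj j) (nj j + nj l),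
        ∫ ω, Yjl Φ e nj n X P p i j l ω * Yjl Φ e nj n X P r i j l ω ∂μ
        = (nj l : ℝ) * ((-(((nj l : ℝ) / (n : ℝ)) * Real.sqrt (nj j) / (nj l : ℝ))) ^ 2 * C) := by
      rw [Finset.sum_congr rfl (fun i hi => ?_), Finset.sum_const, Nat.card_Ioc,
        Nat.add_sub_cancel_left, nsmul_eq_mul]
      rw [Finset.mem_Ioc] at hi
      have hne : ¬(1 ≤ i ∧ i ≤ nj j) := fun h => absurd h.2 (not_le.mpr hi.1)
      have h1 : nj j + 1 ≤ i := hi.1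
      simp only [Yjl, hH0, if_neg hne, if_pos (And.intro h1 hi.2)]
      exact hprod l (i - nj j - 1) _
    have e1 : ((nj l : ℝ) / (n : ℝ) / Real.sqrt (nj j)) ^ 2
        = (nj l : ℝ) ^ 2 / ((n : ℝ) ^ 2 * (nj j : ℝ)) := by
      rw [div_pow, div_pow, Real.sq_sqrt hjj.le, div_div]
    have e2 : (-((nj l : ℝ) / (n : ℝ) * Real.sqrt (nj j) / (nj l : ℝ))) ^ 2
        = (nj l : ℝ) ^ 2 * (nj j : ℝ) / ((n : ℝ) ^ 2 * (nj l : ℝ) ^ 2) := by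
      rw [neg_sq, div_pow, mul_pow, div_pow, Real.sq_sqrt hjj.le]
      ring
    rw [h1, h2, e1, e2]
    field_simp
  -- rewrite the double sum
  rw [Finset.sum_congr rfl fun j _ => Finset.sum_congr rfl fun l _ => hsum_i j l]
  -- algebraic identity
  have hsumA : ∑ j, (nj j : ℝ) = (n : ℝ) := by rw [hn, Nat.cast_sum]
  have halg : ∑ j : Fin k, ∑ l ∈ Finset.univ.erase j, ((nj l : ℝ) ^ 2 + (nj j : ℝ) * (nj l : ℝ))
      = (n : ℝ) ^ 2 + ((k : ℝ) - 2) * ∑ l, (nj l : ℝ) ^ 2 := by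
    have h1 : ∀ j : Fin k, ∑ l ∈ Finset.univ.erase j, ((nj l : ℝ) ^ 2 + (nj j : ℝ) * (nj l : ℝ))
        = (∑ l, (nj l : ℝ) ^ 2) + (nj j : ℝ) * (n : ℝ) - 2 * (nj j : ℝ) ^ 2 := by
      intro j
      rw [Finset.sum_erase_eq_sub (Finset.mem_univ j), Finset.sum_add_distrib,
        ← Finset.mul_sum, hsumA]
      ring
    rw [Finset.sum_congr rfl fun j _ => h1 j]
    rw [Finset.sum_sub_distrib, Finset.sum_add_distrib, Finset.sum_const, ← Finset.sum_mul,
      hsumA, ← Finset.mul_sum, Finset.card_univ, Fintype.card_fin, nsmul_eq_mul]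
    ring
  have hre : ∀ q : ℝ, q / (n : ℝ) ^ 2 * C = q * (C / (n : ℝ) ^ 2) := fun q => by ring
  simp_rw [hre, ← Finset.sum_mul]
  rw [halg]
  have hS : ∑ l, ((nj l : ℝ) / (n : ℝ)) ^ 2 = (∑ l, (nj l : ℝ) ^ 2) / (n : ℝ) ^ 2 := by
    simp_rw [div_pow]; rw [Finset.sum_div]
  rw [hS, hC]
  field_simp
end
end

section
/- With Λ_n the n×n Gram matrix of the pooled sample, N_n the block-diagonal centering matrix, γ_n > 0, Ŵ_n = n^{-1}ΓN_nN_n^TΓ^* (Γ the pooled feature map from ℝ^n to H), V̂_n = Ŵ_n + γ_n I, and M_n = (I_n + n^{-1}γ_n^{-1} N_n^T Λ_n N_n)^{-1}, one has the deterministic trace identity: tr(V̂_n^{-2} Ŵ_n²) = tr( n^{-2}γ_n^{-2}(N_n^TΛ_nN_n)² − 2n^{-3}γ_n^{-3}M_n(N_n^TΛ_nN_n)³ + n^{-4}γ_n^{-4}(M_nN_n^TΛ_nN_n)²(N_n^TΛ_nN_n)² ), where the left-hand trace is over operators on H and the right-hand trace over n×n matrices. -/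
open Finset Matrix
open scoped RealInnerProductSpace

set_option maxHeartbeats 1000000
set_option synthInstance.maxHeartbeats 400000

noncomputable section

section Aux

variable {H : Type*} [NormedAddCommGroup H] [InnerProductSpace ℝ H]

lemma rankOne_apply' (u v h : H) : rankOne u v h = ⟪u, h⟫ • v := rfl

lemma rankOne_mul_rankOne (u v u' v' : H) :
    rankOne u v * rankOne u' v' = ⟪u, v'⟫ • rankOne u' v := by
  ext h
  simp only [ContinuousLinearMap.mul_apply, ContinuousLinearMap.smul_apply, rankOne_apply',
    inner_smul_right, smul_smul]
  rw [mul_comm]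

/-- the permutation of two index pairs used in `opS_mul`. -/
def pswap (ι : Type*) : ((ι × ι) × (ι × ι)) ≃ ((ι × ι) × (ι × ι)) where
  toFun q := ((q.1.1, q.2.2), (q.2.1, q.1.2))
  invFun q := ((q.1.1, q.2.2), (q.2.1, q.1.2))
  left_inv := fun ⟨⟨_, _⟩, ⟨_, _⟩⟩ => rfl
  right_inv := fun ⟨⟨_, _⟩, ⟨_, _⟩⟩ => rfl

variable {ι : Type*} [Fintype ι]

/-- The Gram matrix of a family of vectors. -/
def gramOf (φ : ι → H) : Matrix ι ι ℝ := Matrix.of fun a c => ⟪φ a, φ c⟫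

/-- `Γ B Γ*`, written through rank-one operators. -/
def opS (φ : ι → H) (B : Matrix ι ι ℝ) : H →L[ℝ] H :=
  ∑ a, ∑ c, B a c • rankOne (φ c) (φ a)

lemma opS_pair (φ : ι → H) (B : Matrix ι ι ℝ) :
    opS φ B = ∑ x : ι × ι, B x.1 x.2 • rankOne (φ x.2) (φ x.1) :=
  (Fintype.sum_prod_type (f := fun x : ι × ι => B x.1 x.2 • rankOne (φ x.2) (φ x.1))).symm

lemma opS_smul (φ : ι → H) (r : ℝ) (B : Matrix ι ι ℝ) : opS φ (r • B) = r • opS φ B := by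
  simp [opS, Finset.smul_sum, smul_smul, Matrix.smul_apply]

lemma opS_add (φ : ι → H) (B C : Matrix ι ι ℝ) : opS φ (B + C) = opS φ B + opS φ C := by
  simp [opS, add_smul, Finset.sum_add_distrib]

lemma opS_zero (φ : ι → H) : opS φ (0 : Matrix ι ι ℝ) = 0 := by
  simp [opS]

lemma opS_mul (φ : ι → H) (B C : Matrix ι ι ℝ) :
    opS φ B * opS φ C = opS φ (B * gramOf φ * C) := by
  have L : opS φ B * opS φ C
      = ∑ q : (ι × ι) × (ι × ι),
          (B q.1.1 q.1.2 * (C q.2.1 q.2.2 * ⟪φ q.1.2, φ q.2.1⟫)) •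
            rankOne (φ q.2.2) (φ q.1.1) := by
    rw [Fintype.sum_prod_type (f := fun q : (ι × ι) × (ι × ι) =>
        (B q.1.1 q.1.2 * (C q.2.1 q.2.2 * ⟪φ q.1.2, φ q.2.1⟫)) •
          rankOne (φ q.2.2) (φ q.1.1)),
      opS_pair φ B, opS_pair φ C, Finset.sum_mul_sum]
    refine Finset.sum_congr rfl fun x _ => Finset.sum_congr rfl fun y _ => ?_
    rw [smul_mul_assoc, mul_smul_comm, rankOne_mul_rankOne, smul_smul, smul_smul]
    congr 1
    ring
  have R : opS φ (B * gramOf φ * C)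
      = ∑ q : (ι × ι) × (ι × ι),
          (B q.1.1 q.2.2 * ⟪φ q.2.2, φ q.2.1⟫ * C q.2.1 q.1.2) •
            rankOne (φ q.1.2) (φ q.1.1) := by
    rw [opS_pair,
      Fintype.sum_prod_type (f := fun q : (ι × ι) × (ι × ι) =>
        (B q.1.1 q.2.2 * ⟪φ q.2.2, φ q.2.1⟫ * C q.2.1 q.1.2) •
          rankOne (φ q.1.2) (φ q.1.1))]
    refine Finset.sum_congr rfl fun z _ => ?_
    rw [Fintype.sum_prod_type]
    simp only [Matrix.mul_apply, gramOf, Matrix.of_apply, Finset.sum_mul, Finset.sum_smul]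
  rw [L, R]
  exact Fintype.sum_equiv (pswap ι) _ _ (fun ⟨⟨a, b⟩, ⟨c, d⟩⟩ => by
    simp only [pswap, Equiv.coe_fn_mk]
    congr 1
    ring)

lemma opS_trace [CompleteSpace H] (b : HilbertBasis ℕ ℝ H) (φ : ι → H) (B : Matrix ι ι ℝ) :
    (∑' p, ⟪b p, (opS φ B) (b p)⟫) = Matrix.trace (B * gramOf φ) := by
  have h1 : ∀ p : ℕ, ⟪b p, (opS φ B) (b p)⟫
      = ∑ a, ∑ c, B a c * (⟪φ c, b p⟫ * ⟪b p, φ a⟫) := by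
    intro p
    simp only [opS, ContinuousLinearMap.coe_sum', Finset.sum_apply,
      ContinuousLinearMap.coe_smul', Pi.smul_apply, inner_sum, inner_smul_right]
    refine Finset.sum_congr rfl fun a _ => Finset.sum_congr rfl fun c _ => ?_
    rw [rankOne_apply']
    simp only [inner_smul_right]
    try ring
  have hsum : ∀ a c : ι, Summable fun p => B a c * (⟪φ c, b p⟫ * ⟪b p, φ a⟫) :=
    fun a c => (b.summable_inner_mul_inner (φ c) (φ a)).mul_left _
  calc (∑' p, ⟪b p, (opS φ B) (b p)⟫)
      = ∑' p, ∑ a, ∑ c, B a c * (⟪φ c, b p⟫ * ⟪b p, φ a⟫) := tsum_congr h1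
    _ = ∑ a, ∑ c, ∑' p, B a c * (⟪φ c, b p⟫ * ⟪b p, φ a⟫) := by
        rw [Summable.tsum_finsetSum fun a _ => summable_sum fun c _ => hsum a c]
        exact Finset.sum_congr rfl fun a _ => Summable.tsum_finsetSum fun c _ => hsum a c
    _ = ∑ a, ∑ c, B a c * ⟪φ c, φ a⟫ := by
        refine Finset.sum_congr rfl fun a _ => Finset.sum_congr rfl fun c _ => ?_
        rw [tsum_mul_left, b.tsum_inner_mul_inner]
    _ = Matrix.trace (B * gramOf φ) := by
        rw [Matrix.trace]
        simp only [Matrix.diag_apply, Matrix.mul_apply, gramOf, Matrix.of_apply]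

lemma gram_quad_nonneg (φ : ι → H) (y : ι → ℝ) : 0 ≤ y ⬝ᵥ (gramOf φ *ᵥ y) := by
  have : y ⬝ᵥ (gramOf φ *ᵥ y) = ⟪∑ i, y i • φ i, ∑ j, y j • φ j⟫ := by
    rw [sum_inner]
    simp only [dotProduct, Matrix.mulVec, gramOf, Matrix.of_apply, inner_sum,
      real_inner_smul_left, inner_smul_right, dotProduct, Finset.mul_sum]
    refine Finset.sum_congr rfl fun i _ => Finset.sum_congr rfl fun j _ => ?_
    ring
  rw [this]
  exact real_inner_self_nonneg

lemma gram_transpose (φ : ι → H) : (gramOf φ)ᵀ = gramOf φ := by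
  ext a c
  simp only [Matrix.transpose_apply, gramOf, Matrix.of_apply]
  exact real_inner_comm _ _

lemma one_add_smul_posDef [DecidableEq ι] (φ : ι → H) (N : Matrix ι ι ℝ) {u : ℝ} (hu : 0 ≤ u) :
    ((1 : Matrix ι ι ℝ) + u • (Nᵀ * gramOf φ * N)).PosDef := by
  refine Matrix.posDef_iff_dotProduct_mulVec.mpr ⟨?_, ?_⟩
  · rw [Matrix.IsHermitian, Matrix.conjTranspose_eq_transpose_of_trivial,
      Matrix.transpose_add, Matrix.transpose_one, Matrix.transpose_smul,
      Matrix.transpose_mul, Matrix.transpose_mul, Matrix.transpose_transpose,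
      gram_transpose, Matrix.mul_assoc]
  · intro x hx
    have hq : x ⬝ᵥ ((Nᵀ * gramOf φ * N) *ᵥ x) = (N *ᵥ x) ⬝ᵥ (gramOf φ *ᵥ (N *ᵥ x)) := by
      rw [← Matrix.mulVec_mulVec, ← Matrix.mulVec_mulVec, Matrix.dotProduct_mulVec,
        Matrix.vecMul_transpose]
    have hx2 : 0 < x ⬝ᵥ x := by
      rcases lt_or_eq_of_le (dotProduct_self_star_nonneg x) with h | h
      · simpa using h
      · exact absurd (dotProduct_self_eq_zero.mp (by simpa using h.symm)) hx
    have : star x ⬝ᵥ (((1 : Matrix ι ι ℝ) + u • (Nᵀ * gramOf φ * N)) *ᵥ x)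
        = x ⬝ᵥ x + u * ((N *ᵥ x) ⬝ᵥ (gramOf φ *ᵥ (N *ᵥ x))) := by
      simp only [star_trivial, Matrix.add_mulVec, Matrix.one_mulVec,
        Matrix.smul_mulVec, dotProduct_add, dotProduct_smul, smul_eq_mul, hq]
    rw [this]
    exact lt_add_of_pos_of_le hx2 (mul_nonneg hu (gram_quad_nonneg _ _))

lemma opS_woodbury (φ : ι → H) (A₀ C : Matrix ι ι ℝ) (γ γ' : ℝ) :
    (opS φ A₀ + γ • (1 : H →L[ℝ] H)) * (γ' • (1 : H →L[ℝ] H) + opS φ C)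
      = (γ * γ') • (1 : H →L[ℝ] H)
        + opS φ (γ' • A₀ + γ • C + A₀ * gramOf φ * C) := by
  rw [add_mul, mul_add, mul_add, opS_mul, mul_smul_comm, mul_one, smul_mul_assoc,
    smul_mul_assoc, one_mul, smul_smul, opS_add, opS_add, opS_smul, opS_smul]
  abel

lemma opS_woodbury' (φ : ι → H) (A₀ C : Matrix ι ι ℝ) (γ γ' : ℝ) :
    (γ' • (1 : H →L[ℝ] H) + opS φ C) * (opS φ A₀ + γ • (1 : H →L[ℝ] H))
      = (γ * γ') • (1 : H →L[ℝ] H)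
        + opS φ (γ' • A₀ + γ • C + C * gramOf φ * A₀) := by
  simp only [add_mul, mul_add, opS_mul, mul_smul_comm, smul_mul_assoc, one_mul, mul_one,
    smul_add, smul_smul, opS_add, opS_smul, mul_comm γ' γ]
  abel

end Aux


theorem main_general {H : Type*} [NormedAddCommGroup H] [InnerProductSpace ℝ H]
    [CompleteSpace H] (b : HilbertBasis ℕ ℝ H)
    {ι : Type*} [Fintype ι] [DecidableEq ι]
    (φ : ι → H) (N : Matrix ι ι ℝ) (s γ : ℝ) (hs : 0 ≤ s) (hγ : 0 < γ) :
    (∑' p, ⟪b p, ((Ring.inverse (s • opS φ (N * Nᵀ) + γ • (1 : H →L[ℝ] H))) ^ 2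
        * (s • opS φ (N * Nᵀ)) ^ 2) (b p)⟫)
      = Matrix.trace
          ((s ^ 2 * γ⁻¹ ^ 2) • (Nᵀ * gramOf φ * N) ^ 2
            - (2 * s ^ 3 * γ⁻¹ ^ 3) •
              (((1 : Matrix ι ι ℝ) + (s * γ⁻¹) • (Nᵀ * gramOf φ * N))⁻¹
                * (Nᵀ * gramOf φ * N) ^ 3)
            + (s ^ 4 * γ⁻¹ ^ 4) •
              ((((1 : Matrix ι ι ℝ) + (s * γ⁻¹) • (Nᵀ * gramOf φ * N))⁻¹
                  * (Nᵀ * gramOf φ * N)) ^ 2 * (Nᵀ * gramOf φ * N) ^ 2)) := by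
  have hγ' : γ ≠ 0 := hγ.ne'
  set Λm := gramOf φ with hΛm
  set P := Nᵀ * Λm * N with hP
  set u := s * γ⁻¹ with hu
  set G := (1 : Matrix ι ι ℝ) + u • P with hG
  set M := G⁻¹ with hM
  have hGpd : G.PosDef := one_add_smul_posDef φ N (mul_nonneg hs (inv_nonneg.2 hγ.le))
  have hdet : IsUnit G.det := (Matrix.isUnit_iff_isUnit_det G).mp hGpd.isUnit
  have hM1 : G * M = 1 := Matrix.mul_nonsing_inv _ hdet
  have hM2 : M * G = 1 := Matrix.nonsing_inv_mul _ hdet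
  set A0 := s • (N * Nᵀ) with hA0
  set Cm := (-(s * γ⁻¹ * γ⁻¹)) • (N * M * Nᵀ) with hCm
  set Vi := γ⁻¹ • (1 : H →L[ℝ] H) + opS φ Cm with hVi
  -- the matrix Woodbury identities
  have e1 : γ⁻¹ • A0 = u • (N * Nᵀ) := by
    rw [hA0, smul_smul, hu, mul_comm]
  have e2 : γ • Cm = (-u) • (N * M * Nᵀ) := by
    rw [hCm, smul_smul, hu]
    congr 1
    field_simp
  have e3 : A0 * Λm * Cm = (-(u * u)) • (N * (P * M) * Nᵀ) := by
    rw [hA0, hCm, hP, hu]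
    simp only [Matrix.smul_mul, Matrix.mul_smul, smul_smul, Matrix.mul_assoc]
    module
  have e3' : Cm * Λm * A0 = (-(u * u)) • (N * (M * P) * Nᵀ) := by
    rw [hA0, hCm, hP, hu]
    simp only [Matrix.smul_mul, Matrix.mul_smul, smul_smul, Matrix.mul_assoc]
    module
  have key1 : γ⁻¹ • A0 + γ • Cm + A0 * Λm * Cm = 0 := by
    rw [e1, e2, e3]
    have expand : u • (N * Nᵀ) + (-u) • (N * M * Nᵀ) + (-(u * u)) • (N * (P * M) * Nᵀ)
        = u • (N * (((1 : Matrix ι ι ℝ) - G * M) * Nᵀ)) := by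
      rw [hG]
      simp only [Matrix.sub_mul, Matrix.add_mul, Matrix.one_mul, Matrix.smul_mul,
        Matrix.mul_smul, Matrix.mul_sub, Matrix.mul_add, Matrix.mul_one, smul_sub, smul_add,
        smul_smul, neg_smul, Matrix.mul_assoc]
      module
    rw [expand, hM1, sub_self, Matrix.zero_mul, Matrix.mul_zero, smul_zero]
  have key2 : γ⁻¹ • A0 + γ • Cm + Cm * Λm * A0 = 0 := by
    rw [e1, e2, e3']
    have expand : u • (N * Nᵀ) + (-u) • (N * M * Nᵀ) + (-(u * u)) • (N * (M * P) * Nᵀ)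
        = u • (N * (((1 : Matrix ι ι ℝ) - M * G) * Nᵀ)) := by
      rw [hG]
      simp only [Matrix.sub_mul, Matrix.add_mul, Matrix.one_mul, Matrix.smul_mul,
        Matrix.mul_smul, Matrix.mul_sub, Matrix.mul_add, Matrix.mul_one, smul_sub, smul_add,
        smul_smul, neg_smul, Matrix.mul_assoc]
      module
    rw [expand, hM2, sub_self, Matrix.zero_mul, Matrix.mul_zero, smul_zero]
  have h1 : (opS φ A0 + γ • (1 : H →L[ℝ] H)) * Vi = 1 := by
    rw [hVi, opS_woodbury, key1, opS_zero, mul_inv_cancel₀ hγ', one_smul, add_zero]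
  have h2 : Vi * (opS φ A0 + γ • (1 : H →L[ℝ] H)) = 1 := by
    rw [hVi, opS_woodbury', key2, opS_zero, mul_inv_cancel₀ hγ', one_smul, add_zero]
  have hA0op : s • opS φ (N * Nᵀ) = opS φ A0 := (opS_smul φ s (N * Nᵀ)).symm
  have hinv : Ring.inverse (opS φ A0 + γ • (1 : H →L[ℝ] H)) = Vi :=
    Ring.inverse_unit (⟨_, Vi, h1, h2⟩ : (H →L[ℝ] H)ˣ)
  have hViop : ∀ B : Matrix ι ι ℝ, Vi * opS φ B = opS φ (γ⁻¹ • B + Cm * Λm * B) := by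
    intro B
    rw [hVi, add_mul, smul_mul_assoc, one_mul, opS_mul, opS_add, opS_smul, hΛm]
  have hop : (Ring.inverse (opS φ A0 + γ • (1 : H →L[ℝ] H))) ^ 2 * (opS φ A0) ^ 2
      = opS φ (γ⁻¹ • (γ⁻¹ • (A0 * Λm * A0) + Cm * Λm * (A0 * Λm * A0))
          + Cm * Λm * (γ⁻¹ • (A0 * Λm * A0) + Cm * Λm * (A0 * Λm * A0))) := by
    rw [hinv, pow_two, pow_two, mul_assoc, opS_mul, ← hΛm, hViop, hViop]
  set E := γ⁻¹ • (γ⁻¹ • (A0 * Λm * A0) + Cm * Λm * (A0 * Λm * A0))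
      + Cm * Λm * (γ⁻¹ • (A0 * Λm * A0) + Cm * Λm * (A0 * Λm * A0)) with hE
  have step : (∑' p, ⟪b p, ((Ring.inverse (s • opS φ (N * Nᵀ) + γ • (1 : H →L[ℝ] H))) ^ 2
        * (s • opS φ (N * Nᵀ)) ^ 2) (b p)⟫) = Matrix.trace (E * Λm) := by
    rw [tsum_congr (fun p => by rw [hA0op, hop] :
      ∀ p : ℕ, ⟪b p, ((Ring.inverse (s • opS φ (N * Nᵀ) + γ • (1 : H →L[ℝ] H))) ^ 2
        * (s • opS φ (N * Nᵀ)) ^ 2) (b p)⟫ = ⟪b p, (opS φ E) (b p)⟫)]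
    rw [opS_trace b φ E, ← hΛm]
  rw [step]
  have c1 : Matrix.trace (N * (Nᵀ * (Λm * (N * (Nᵀ * Λm))))) = Matrix.trace (P * P) := by
    rw [Matrix.trace_mul_comm, hP]
    simp only [Matrix.mul_assoc]
  have c2 : Matrix.trace (N * (M * (Nᵀ * (Λm * (N * (Nᵀ * (Λm * (N * (Nᵀ * Λm)))))))))
      = Matrix.trace (M * (P * (P * P))) := by
    rw [Matrix.trace_mul_comm, hP]
    simp only [Matrix.mul_assoc]
  have c3 : Matrix.trace (N * (M * (Nᵀ * (Λm * (N * (M * (Nᵀ * (Λm *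
        (N * (Nᵀ * (Λm * (N * (Nᵀ * Λm)))))))))))))
      = Matrix.trace (M * (P * (M * (P * (P * P))))) := by
    rw [Matrix.trace_mul_comm, hP]
    simp only [Matrix.mul_assoc]
  rw [hE, hA0, hCm]
  simp only [Matrix.smul_mul, Matrix.mul_smul, smul_smul, Matrix.add_mul, Matrix.mul_add,
    smul_add, neg_smul, neg_mul, mul_neg, neg_neg, Matrix.neg_mul, Matrix.mul_neg,
    pow_succ, pow_zero, Matrix.one_mul, one_mul, Matrix.mul_assoc,
    Matrix.trace_add, Matrix.trace_sub, Matrix.trace_smul, Matrix.trace_neg, smul_eq_mul]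
  rw [c1, c2, c3]
  ring

/-- trace identity for the normalization factor.  With `Λ_n` the Gram
matrix, `N_n` the block-diagonal centering matrix, `Ŵ_n = n⁻¹ Γ N_n N_nᵀ Γ^*`
(written via rank-one operators), `V̂_n = Ŵ_n + γ_n I` and
`M_n = (I + n⁻¹γ_n⁻¹ N_nᵀΛ_nN_n)⁻¹`:
`tr(V̂_n⁻² Ŵ_n²) = tr(n⁻²γ⁻²(N_nᵀΛ_nN_n)² − 2n⁻³γ⁻³M_n(N_nᵀΛ_nN_n)³ + n⁻⁴γ⁻⁴(M_nN_nᵀΛ_nN_n)²(N_nᵀΛ_nN_n)²)`,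
the left trace over `H` (via a Hilbert basis `b`), the right one over `n × n` matrices. -/
theorem trace_identity_normalization
    {𝒳 H : Type*} [NormedAddCommGroup H] [InnerProductSpace ℝ H] [CompleteSpace H]
    (b : HilbertBasis ℕ ℝ H)
    (Φ : 𝒳 → H) {k : ℕ} (hk : 2 ≤ k)
    (nj : Fin k → ℕ) (hnj : ∀ j, 0 < nj j)
    (X : (j : Fin k) → Fin (nj j) → 𝒳)
    (γ : ℝ) (hγ : 0 < γ) :
    letI n : ℕ := ∑ j', nj j'
    letI Lam : Matrix ((j' : Fin k) × Fin (nj j')) ((j' : Fin k) × Fin (nj j')) ℝ :=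
      Matrix.of fun a c => ⟪Φ (X a.1 a.2), Φ (X c.1 c.2)⟫
    letI Nn : Matrix ((j' : Fin k) × Fin (nj j')) ((j' : Fin k) × Fin (nj j')) ℝ :=
      Matrix.of fun a c =>
        if a.1 = c.1 then (if a = c then 1 else 0) - ((nj a.1 : ℝ))⁻¹ else 0
    -- `Ŵ_n = n⁻¹ Γ N_n N_nᵀ Γ^*`, expanded through rank-one operators
    letI What : H →L[ℝ] H :=
      ((n : ℝ))⁻¹ • ∑ a, ∑ c, (Nn * Nnᵀ) a c • rankOne (Φ (X c.1 c.2)) (Φ (X a.1 a.2))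
    letI Vn : H →L[ℝ] H := What + γ • (1 : H →L[ℝ] H)
    letI Mn : Matrix ((j' : Fin k) × Fin (nj j')) ((j' : Fin k) × Fin (nj j')) ℝ :=
      ((1 : Matrix _ _ ℝ) + ((n : ℝ)⁻¹ * γ⁻¹) • (Nnᵀ * Lam * Nn))⁻¹
    (∑' p, ⟪b p, ((Ring.inverse Vn) ^ 2 * What ^ 2) (b p)⟫)
      = Matrix.trace
          (((n : ℝ)⁻¹ ^ 2 * γ⁻¹ ^ 2) • (Nnᵀ * Lam * Nn) ^ 2
            - (2 * (n : ℝ)⁻¹ ^ 3 * γ⁻¹ ^ 3) • (Mn * (Nnᵀ * Lam * Nn) ^ 3)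
            + ((n : ℝ)⁻¹ ^ 4 * γ⁻¹ ^ 4) • ((Mn * (Nnᵀ * Lam * Nn)) ^ 2 * (Nnᵀ * Lam * Nn) ^ 2)) := by
  have key := main_general (ι := (j' : Fin k) × Fin (nj j')) b
    (fun a => Φ (X a.1 a.2))
    (Matrix.of fun a c =>
      if a.1 = c.1 then (if a = c then 1 else 0) - ((nj a.1 : ℝ))⁻¹ else 0)
    (((∑ j', nj j' : ℕ) : ℝ))⁻¹ γ (by positivity) hγ
  exact key
end
end
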